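/- arXiv:1407.3645 — 2 statements merged into one kernel-verified Lean document; each statement's English description precedes it below -/
import Mathlib

section
/- Let N₀ ≥ 0 and let A ⊆ (0,1] be a nonempty union of level-N₀ dyadic intervals. If B ⊆ A is a Borel set such that g⁻¹(B) = B for every dyadic permutation g ∈ Perm^dyad_A (i.e. every dyadic permutation that is the identity on A^c), then λ(B) = 0 or λ(A \ B) = 0, where λ denotes Lebesgue measure. -/
open MeasureTheory

/-- The `k`-th dyadic interval of level `d` (1-indexed): `I_k^d = ((k-1)/2^d, k/2^d]`. -/
def dyadI (d k : ℕ) : Set ℝ := Set.Ioc (((k : ℝ) - 1) / 2 ^ d) ((k : ℝ) / 2 ^ d)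

/-- `g` is a dyadic permutation of `(0,1]` (extended to `ℝ` by the identity outside `(0,1]`):
for some `d ≥ 0` and some permutation `π` of the level-`d` dyadic intervals (indexed here by
`Fin (2^d)`, i.e. `0`-based), `g` shifts `I_{k+1}^d` onto `I_{π(k)+1}^d`. -/
def IsDyadicPerm (g : ℝ → ℝ) : Prop :=
  (∀ t ∉ Set.Ioc (0 : ℝ) 1, g t = t) ∧
  ∃ d : ℕ, ∃ π : Equiv.Perm (Fin (2 ^ d)),
    ∀ k : Fin (2 ^ d), ∀ t ∈ dyadI d ((k : ℕ) + 1),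
      g t = (((π k : ℕ) : ℝ) + 1) / 2 ^ d - (((k : ℕ) + 1 : ℝ) / 2 ^ d - t)

open scoped ENNReal

set_option maxHeartbeats 1000000

lemma dyadI_succ (d k : ℕ) : dyadI d (k + 1) = Set.Ioc ((k : ℝ) / 2 ^ d) (((k : ℝ) + 1) / 2 ^ d) := by
  simp only [dyadI, Nat.cast_add, Nat.cast_one, add_sub_cancel_right]

lemma mem_dyadI_iff_ceil {d k : ℕ} {t : ℝ} :
    t ∈ dyadI d (k + 1) ↔ ⌈t * 2 ^ d⌉ = (k : ℤ) + 1 := by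
  have h2 : (0:ℝ) < 2 ^ d := by positivity
  rw [dyadI_succ, Set.mem_Ioc, Int.ceil_eq_iff]
  push_cast
  rw [div_lt_iff₀ h2, le_div_iff₀ h2]
  constructor
  · rintro ⟨h1, h2⟩; constructor <;> linarith
  · rintro ⟨h1, h2⟩; constructor <;> linarith

lemma dyadI_inj {d j k : ℕ} {t : ℝ} (hj : t ∈ dyadI d (j + 1)) (hk : t ∈ dyadI d (k + 1)) :
    j = k := by
  rw [mem_dyadI_iff_ceil] at hj hk
  have : (j : ℤ) = k := by omega
  exact_mod_cast this

lemma exists_mem_dyadI {d : ℕ} {t : ℝ} (ht : t ∈ Set.Ioc (0 : ℝ) 1) :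
    ∃ k : Fin (2 ^ d), t ∈ dyadI d ((k : ℕ) + 1) := by
  have h2 : (0:ℝ) < 2 ^ d := by positivity
  have h1 : 1 ≤ ⌈t * 2 ^ d⌉ := by
    rw [Int.le_ceil_iff]; push_cast; nlinarith [ht.1]
  have hle : ⌈t * 2 ^ d⌉ ≤ 2 ^ d := by
    apply Int.ceil_le.2; push_cast; nlinarith [ht.2]
  have hcast : ((2 ^ d : ℕ) : ℤ) = (2 : ℤ) ^ d := by push_cast; ring
  refine ⟨⟨(⌈t * 2 ^ d⌉).toNat - 1, by omega⟩, ?_⟩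
  rw [mem_dyadI_iff_ceil]
  simp only
  omega

lemma dyadI_subset_Ioc {d k : ℕ} (hk : k < 2 ^ d) : dyadI d (k + 1) ⊆ Set.Ioc 0 1 := by
  have h2 : (0:ℝ) < 2 ^ d := by positivity
  rw [dyadI_succ]
  rintro t ⟨h1, hle⟩
  have hk' : (k : ℝ) + 1 ≤ 2 ^ d := by exact_mod_cast hk
  constructor
  · have : (0:ℝ) ≤ (k : ℝ) / 2 ^ d := by positivity
    linarith
  · calc t ≤ ((k : ℝ) + 1) / 2 ^ d := hle
      _ ≤ 1 := by rw [div_le_one h2]; exact hk'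

lemma dyadI_subset_parent {N₀ d : ℕ} (hNd : N₀ ≤ d) (k : ℕ) :
    dyadI d (k + 1) ⊆ dyadI N₀ (k / 2 ^ (d - N₀) + 1) := by
  set e := d - N₀ with he
  have hd : d = N₀ + e := by omega
  set q := k / 2 ^ e with hq
  have hq1 : q * 2 ^ e ≤ k := Nat.div_mul_le_self k _
  have hq2 : k + 1 ≤ (q + 1) * 2 ^ e := by
    have h := Nat.lt_mul_div_succ k (show 0 < 2 ^ e by positivity)
    rw [Nat.mul_comm] at h
    exact h
  have hX : (0:ℝ) < 2 ^ N₀ := by positivity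
  have hY : (0:ℝ) < 2 ^ e := by positivity
  have hpow : (2:ℝ) ^ d = 2 ^ N₀ * 2 ^ e := by rw [hd, pow_add]
  have hq1' : (q : ℝ) * 2 ^ e ≤ k := by exact_mod_cast hq1
  have hq2' : (k : ℝ) + 1 ≤ ((q : ℝ) + 1) * 2 ^ e := by exact_mod_cast hq2
  have hd2 : (0:ℝ) < 2 ^ d := by positivity
  rw [dyadI_succ, dyadI_succ]
  rintro t ⟨h1, h2⟩
  rw [div_lt_iff₀ hd2] at h1
  rw [le_div_iff₀ hd2] at h2
  rw [hpow] at h1 h2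
  rw [Set.mem_Ioc, div_lt_iff₀ hX, le_div_iff₀ hX]
  constructor
  · nlinarith
  · nlinarith

open Classical in
noncomputable def gPerm (d : ℕ) (π : Equiv.Perm (Fin (2 ^ d))) (t : ℝ) : ℝ :=
  if h : ∃ k : Fin (2 ^ d), t ∈ dyadI d ((k : ℕ) + 1)
  then t + (((π h.choose : ℕ) : ℝ) - ((h.choose : ℕ) : ℝ)) / 2 ^ d
  else t

lemma gPerm_apply (d : ℕ) (π : Equiv.Perm (Fin (2 ^ d))) {k : Fin (2 ^ d)} {t : ℝ}
    (ht : t ∈ dyadI d ((k : ℕ) + 1)) :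
    gPerm d π t = t + (((π k : ℕ) : ℝ) - ((k : ℕ) : ℝ)) / 2 ^ d := by
  have h : ∃ k' : Fin (2 ^ d), t ∈ dyadI d ((k' : ℕ) + 1) := ⟨k, ht⟩
  rw [gPerm]
  rw [dif_pos h]
  have hk : h.choose = k := Fin.ext (dyadI_inj h.choose_spec ht)
  rw [hk]

lemma gPerm_id (d : ℕ) (π : Equiv.Perm (Fin (2 ^ d))) {t : ℝ}
    (ht : t ∉ Set.Ioc (0 : ℝ) 1) : gPerm d π t = t := by
  rw [gPerm]
  rw [dif_neg]
  rintro ⟨k, hk⟩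
  exact ht (dyadI_subset_Ioc k.isLt hk)

lemma gPerm_isDyadicPerm (d : ℕ) (π : Equiv.Perm (Fin (2 ^ d))) :
    IsDyadicPerm (gPerm d π) := by
  refine ⟨fun t ht => gPerm_id d π ht, d, π, fun k t ht => ?_⟩
  rw [gPerm_apply d π ht]
  ring

/-- if `A` is a nonempty union of level-`N₀` dyadic intervals and `B ⊆ A`
is Borel with `g ⁻¹' B = B` for every dyadic permutation `g` that is the identity off `A`,
then `λ B = 0` or `λ (A \ B) = 0`. -/
theorem stmt13 (N₀ : ℕ) (s : Finset (Fin (2 ^ N₀))) (hs : s.Nonempty)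
    (A : Set ℝ) (hA : A = ⋃ k ∈ s, dyadI N₀ ((k : ℕ) + 1))
    (B : Set ℝ) (hBA : B ⊆ A) (hB : MeasurableSet B)
    (hinv : ∀ g : ℝ → ℝ, IsDyadicPerm g → (∀ t ∉ A, g t = t) → g ⁻¹' B = B) :
    volume B = 0 ∨ volume (A \ B) = 0 := by
  by_contra hcon
  push_neg at hcon
  obtain ⟨hB0, hAB0⟩ := hcon
  have hAsub : A ⊆ Set.Ioc (0:ℝ) 1 := by
    rw [hA]
    exact Set.iUnion₂_subset fun q _ => dyadI_subset_Ioc q.isLt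
  have hIoc01 : volume (Set.Ioc (0:ℝ) 1) ≠ ⊤ := by
    rw [Real.volume_Ioc]; exact ENNReal.ofReal_ne_top
  have hAfin : volume A ≠ ⊤ := ne_top_of_le_ne_top hIoc01 (measure_mono hAsub)
  have hBfin : volume B ≠ ⊤ := ne_top_of_le_ne_top hAfin (measure_mono hBA)
  have hA0 : volume A ≠ 0 := fun h => hB0 (measure_mono_null hBA h)
  set a := volume A with ha
  set b := volume B with hb
  set c : ℝ≥0∞ := b / a with hc
  -- key: swapping two dyadic subintervals of A preserves the measure of B inside them
  have key : ∀ (d : ℕ) (j k : Fin (2 ^ d)), dyadI d ((j:ℕ)+1) ⊆ A → dyadI d ((k:ℕ)+1) ⊆ A →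
      volume (B ∩ dyadI d ((j:ℕ)+1)) = volume (B ∩ dyadI d ((k:ℕ)+1)) := by
    intro d j k hj hk
    set π := Equiv.swap j k with hπ
    have hgid : ∀ t ∉ A, gPerm d π t = t := by
      intro t htA
      by_cases ht : t ∈ Set.Ioc (0:ℝ) 1
      · obtain ⟨i, hi⟩ := exists_mem_dyadI ht
        have hij : i ≠ j := fun h => htA (hj (h ▸ hi))
        have hik : i ≠ k := fun h => htA (hk (h ▸ hi))
        rw [gPerm_apply d π hi, hπ, Equiv.swap_apply_of_ne_of_ne hij hik]
        ring
      · exact gPerm_id d π ht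
    have hgB : gPerm d π ⁻¹' B = B := hinv _ (gPerm_isDyadicPerm d π) hgid
    set cc : ℝ := ((j:ℕ):ℝ)/2^d - ((k:ℕ):ℝ)/2^d with hcc
    have hg : ∀ t ∈ dyadI d ((k:ℕ)+1), gPerm d π t = t + cc := by
      intro t htI
      rw [gPerm_apply d π htI, hπ, Equiv.swap_apply_right, hcc]
      ring
    have hIoc : ∀ t : ℝ, (t ∈ dyadI d ((k:ℕ)+1) ↔ t + cc ∈ dyadI d ((j:ℕ)+1)) := by
      intro t
      rw [dyadI_succ, dyadI_succ, Set.mem_Ioc, Set.mem_Ioc]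
      have h2 : (0:ℝ) < 2 ^ d := by positivity
      have hccd : cc * 2 ^ d = ((j:ℕ):ℝ) - ((k:ℕ):ℝ) := by
        rw [hcc]; field_simp
      rw [div_lt_iff₀ h2, le_div_iff₀ h2, div_lt_iff₀ h2, le_div_iff₀ h2]
      constructor
      · rintro ⟨h1', h2'⟩
        constructor <;> nlinarith
      · rintro ⟨h1', h2'⟩
        constructor <;> nlinarith
    have hset : B ∩ dyadI d ((k:ℕ)+1) = (fun t => t + cc) ⁻¹' (B ∩ dyadI d ((j:ℕ)+1)) := by
      ext t
      simp only [Set.mem_inter_iff, Set.mem_preimage]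
      constructor
      · rintro ⟨htB, htI⟩
        refine ⟨?_, (hIoc t).mp htI⟩
        have h1 : t ∈ gPerm d π ⁻¹' B := by rw [hgB]; exact htB
        rw [Set.mem_preimage, hg t htI] at h1
        exact h1
      · rintro ⟨htB, htI⟩
        have htk : t ∈ dyadI d ((k:ℕ)+1) := (hIoc t).mpr htI
        have h1 : t ∈ gPerm d π ⁻¹' B := by
          rw [Set.mem_preimage, hg t htk]; exact htB
        rw [hgB] at h1
        exact ⟨h1, htk⟩
    rw [hset, measure_preimage_add_right]
  -- density point of B
  obtain ⟨x, hxB, hxT⟩ := MeasureTheory.Measure.exists_mem_of_measure_ne_zero_of_ae hB0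
    (ae_restrict_of_ae (Besicovitch.ae_tendsto_measure_inter_div_of_measurableSet volume hB))
  rw [Set.indicator_of_mem hxB] at hxT
  simp only [Pi.one_apply] at hxT
  have hx01 : x ∈ Set.Ioc (0:ℝ) 1 := hAsub (hBA hxB)
  -- the per-level bound
  have bound : ∀ d : ℕ, N₀ ≤ d →
      volume (B ∩ Metric.closedBall x (((2:ℝ)^d)⁻¹)) /
        volume (Metric.closedBall x (((2:ℝ)^d)⁻¹)) ≤ (1 + c) / 2 := by
    intro d hd
    have hlt : ∀ k : Fin (2^d), (k:ℕ) / 2^(d-N₀) < 2^N₀ := by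
      intro k
      have hpe : (0:ℕ) < 2^(d-N₀) := by positivity
      rw [Nat.div_lt_iff_lt_mul hpe]
      have hpow : (2:ℕ)^N₀ * 2^(d-N₀) = 2^d := by rw [← pow_add]; congr 1; omega
      rw [hpow]
      exact k.isLt
    set T : Finset (Fin (2^d)) :=
      Finset.univ.filter (fun k => (⟨(k:ℕ)/2^(d-N₀), hlt k⟩ : Fin (2^N₀)) ∈ s) with hT
    have hsubA : ∀ k ∈ T, dyadI d ((k:ℕ)+1) ⊆ A := by
      intro k hkT
      rw [hT, Finset.mem_filter] at hkT
      refine (dyadI_subset_parent hd (k:ℕ)).trans ?_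
      rw [hA]
      intro t ht
      exact Set.mem_iUnion₂.mpr ⟨_, hkT.2, ht⟩
    have hcoverSub : A ⊆ ⋃ k ∈ T, dyadI d ((k:ℕ)+1) := by
      intro t htA
      have ht01 : t ∈ Set.Ioc (0:ℝ) 1 := hAsub htA
      obtain ⟨k, hk⟩ := exists_mem_dyadI (d := d) ht01
      have hkT : k ∈ T := by
        rw [hA] at htA
        obtain ⟨q, hqs, htq⟩ : ∃ q ∈ s, t ∈ dyadI N₀ ((q:ℕ)+1) := by
          simpa using htA
        have hpar : t ∈ dyadI N₀ ((k:ℕ)/2^(d-N₀) + 1) := dyadI_subset_parent hd (k:ℕ) hk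
        have hqq : (k:ℕ)/2^(d-N₀) = (q:ℕ) := dyadI_inj hpar htq
        rw [hT, Finset.mem_filter]
        refine ⟨Finset.mem_univ _, ?_⟩
        have heq : (⟨(k:ℕ)/2^(d-N₀), hlt k⟩ : Fin (2^N₀)) = q := Fin.ext hqq
        rw [heq]; exact hqs
      exact Set.mem_iUnion₂.mpr ⟨k, hkT, hk⟩
    have hdisjI : ∀ i j : Fin (2^d), i ≠ j →
        Disjoint (dyadI d ((i:ℕ)+1)) (dyadI d ((j:ℕ)+1)) := by
      intro i j hij
      exact Set.disjoint_left.mpr fun t hti htj => hij (Fin.ext (dyadI_inj hti htj))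
    set v : ℝ≥0∞ := ENNReal.ofReal (((2:ℝ)^d)⁻¹) with hv
    have hv0 : v ≠ 0 := by
      rw [hv, Ne, ENNReal.ofReal_eq_zero, not_le]
      positivity
    have hvtop : v ≠ ⊤ := ENNReal.ofReal_ne_top
    have hmeasI : ∀ k : Fin (2^d), MeasurableSet (dyadI d ((k:ℕ)+1)) := by
      intro k; unfold dyadI; exact measurableSet_Ioc
    have hvol : ∀ k : Fin (2^d), volume (dyadI d ((k:ℕ)+1)) = v := by
      intro k
      rw [dyadI_succ, Real.volume_Ioc, hv]
      congr 1
      field_simp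
      ring
    obtain ⟨k₀, hk₀⟩ := exists_mem_dyadI (d := d) hx01
    have hk₀T : k₀ ∈ T := by
      have hxA : x ∈ A := hBA hxB
      obtain ⟨k', hk'T, hxk'⟩ : ∃ k' ∈ T, x ∈ dyadI d ((k':ℕ)+1) := by
        simpa using hcoverSub hxA
      rwa [show k₀ = k' from Fin.ext (dyadI_inj hk₀ hxk')]
    set m := volume (B ∩ dyadI d ((k₀:ℕ)+1)) with hm
    have hall : ∀ k ∈ T, volume (B ∩ dyadI d ((k:ℕ)+1)) = m :=
      fun k hkT => key d k k₀ (hsubA k hkT) (hsubA k₀ hk₀T)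
    have hAsum : a = (T.card : ℝ≥0∞) * v := by
      have hcover : A = ⋃ k ∈ T, dyadI d ((k:ℕ)+1) :=
        le_antisymm hcoverSub (Set.iUnion₂_subset hsubA)
      rw [ha, hcover, measure_biUnion_finset
        (fun i _ j _ hij => hdisjI i j hij) (fun k _ => hmeasI k)]
      rw [Finset.sum_congr rfl (fun k _ => hvol k), Finset.sum_const, nsmul_eq_mul]
    have hBsum : b = (T.card : ℝ≥0∞) * m := by
      have hBcover : B = ⋃ k ∈ T, B ∩ dyadI d ((k:ℕ)+1) := by
        ext t
        simp only [Set.mem_iUnion, Set.mem_inter_iff, exists_prop]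
        constructor
        · intro htB
          have := hcoverSub (hBA htB)
          simp only [Set.mem_iUnion, exists_prop] at this
          obtain ⟨k, hkT, hk⟩ := this
          exact ⟨k, hkT, htB, hk⟩
        · rintro ⟨k, _, htB, _⟩; exact htB
      rw [hb, hBcover, measure_biUnion_finset
        (fun i _ j _ hij => (hdisjI i j hij).mono Set.inter_subset_right Set.inter_subset_right)
        (fun k _ => hB.inter (hmeasI k))]
      rw [Finset.sum_congr rfl (fun k hk => hall k hk), Finset.sum_const, nsmul_eq_mul]
    have hkey2 : b * v = a * m := by rw [hBsum, hAsum]; ring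
    have hmc : m = c * v := by
      have h1 : (c * v) * a = b * v := by
        calc (c * v) * a = (b / a * a) * v := by rw [hc]; ring
          _ = b * v := by rw [ENNReal.div_mul_cancel hA0 hAfin]
      have h2 : m * a = b * v := by rw [mul_comm]; exact hkey2.symm
      exact ((ENNReal.mul_left_inj hA0 hAfin).mp (h2.trans h1.symm))
    have hmlev : m ≤ v := by
      rw [hm, ← hvol k₀]
      exact measure_mono Set.inter_subset_right
    have hmtop : m ≠ ⊤ := (hmlev.trans_lt hvtop.lt_top).ne
    have hIball : dyadI d ((k₀:ℕ)+1) ⊆ Metric.closedBall x (((2:ℝ)^d)⁻¹) := by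
      have hx := hk₀
      rw [dyadI_succ, Set.mem_Ioc] at hx
      intro t ht
      rw [dyadI_succ, Set.mem_Ioc] at ht
      rw [Metric.mem_closedBall, Real.dist_eq, abs_le]
      have hsplit : ((k₀:ℕ):ℝ)/2^d + ((2:ℝ)^d)⁻¹ = (((k₀:ℕ):ℝ)+1)/2^d := by
        field_simp
      constructor <;> [nlinarith [hx.1, hx.2, ht.1, ht.2]; nlinarith [hx.1, hx.2, ht.1, ht.2]]
    have hball : volume (Metric.closedBall x (((2:ℝ)^d)⁻¹)) = 2 * v := by
      rw [Real.volume_closedBall, ENNReal.ofReal_mul (by norm_num : (0:ℝ) ≤ 2), hv]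
      norm_num
    have hdiffv : volume (dyadI d ((k₀:ℕ)+1) \ B) = v - m := by
      have heq : dyadI d ((k₀:ℕ)+1) \ B = dyadI d ((k₀:ℕ)+1) \ (B ∩ dyadI d ((k₀:ℕ)+1)) := by
        rw [Set.diff_inter_self_eq_diff]
      rw [heq, measure_diff Set.inter_subset_right
        ((hB.inter (hmeasI k₀)).nullMeasurableSet) (hm ▸ hmtop), hvol k₀, hm]
    have hsum2 : volume (B ∩ Metric.closedBall x (((2:ℝ)^d)⁻¹)) + (v - m) ≤ 2 * v := by
      rw [← hdiffv, ← measure_union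
        (Set.disjoint_left.mpr fun t ht ht' => ht'.2 ht.1)
        ((hmeasI k₀).diff hB), ← hball]
      exact measure_mono (Set.union_subset Set.inter_subset_right
        (Set.diff_subset.trans hIball))
    have hBball : volume (B ∩ Metric.closedBall x (((2:ℝ)^d)⁻¹)) ≤ v + m := by
      have h2v : 2 * v = (v + m) + (v - m) := by
        calc 2 * v = v + v := two_mul v
          _ = v + (m + (v - m)) := by rw [add_tsub_cancel_of_le hmlev]
          _ = (v + m) + (v - m) := by ring
      rw [h2v] at hsum2
      exact (ENNReal.add_le_add_iff_right ((tsub_le_self.trans_lt hvtop.lt_top).ne)).mp hsum2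
    calc volume (B ∩ Metric.closedBall x (((2:ℝ)^d)⁻¹)) /
          volume (Metric.closedBall x (((2:ℝ)^d)⁻¹))
        ≤ (v + m) / (2 * v) := by
          rw [hball]; exact ENNReal.div_le_div_right hBball _
      _ = (1 + c) / 2 := by
          rw [hmc, show v + c * v = (1 + c) * v by ring]
          exact ENNReal.mul_div_mul_right (1 + c) 2 hv0 hvtop
  -- pass to the limit
  have htend : Filter.Tendsto (fun d : ℕ => ((2:ℝ)^d)⁻¹) Filter.atTop
      (nhdsWithin 0 (Set.Ioi 0)) := by
    apply tendsto_nhdsWithin_of_tendsto_nhds_of_eventually_within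
    · have heq : (fun d : ℕ => ((2:ℝ)^d)⁻¹) = fun d => ((2:ℝ)⁻¹)^d := by
        funext d; rw [inv_pow]
      rw [heq]
      exact tendsto_pow_atTop_nhds_zero_of_lt_one (by norm_num) (by norm_num)
    · exact Filter.Eventually.of_forall fun d => Set.mem_Ioi.mpr (by positivity)
  have hcomp := hxT.comp htend
  have hle1 : (1:ℝ≥0∞) ≤ (1 + c) / 2 :=
    le_of_tendsto hcomp (Filter.eventually_atTop.mpr ⟨N₀, fun d hd => bound d hd⟩)
  have h2le : (2:ℝ≥0∞) ≤ 1 + c := by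
    have := (ENNReal.le_div_iff_mul_le (Or.inl two_ne_zero)
      (Or.inl ENNReal.ofNat_ne_top)).mp hle1
    simpa using this
  have hc1 : (1:ℝ≥0∞) ≤ c := by
    have h11 : (1:ℝ≥0∞) + 1 ≤ 1 + c := by rwa [one_add_one_eq_two]
    exact (ENNReal.add_le_add_iff_left ENNReal.one_ne_top).mp h11
  have hab2 : a ≤ b := by
    rw [hc] at hc1
    have := (ENNReal.le_div_iff_mul_le (Or.inl hA0) (Or.inl hAfin)).mp hc1
    simpa using this
  have hfin : volume (A \ B) = 0 := by
    rw [measure_diff hBA hB.nullMeasurableSet hBfin]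
    exact tsub_eq_zero_of_le hab2
  exact hAB0 hfin
end

section
/- Let μ be a σ-finite Borel measure on ℝ, 𝕞 := λ ⊗ μ on (0,1] × ℝ (λ the Lebesgue measure), and let ℍ be a group of dyadic permutations of (0,1] (a subgroup of Perm^dyad). Let n, m ≥ 1, 0 ≤ k ≤ min(n,m), 0 ≤ r ≤ min(n,m) − k, let f ∈ L₂(𝕞^{⊗n}) and f′ ∈ L₂(𝕞^{⊗m}) satisfy ∫_{((0,1]×ℝ)^k} |f(α,γ,ρ) f′(ρ,γ,β)| d𝕞^{⊗k}(ρ) < ∞ for all (α,β,γ) ∈ ((0,1]×ℝ)^{n−k−r} × ((0,1]×ℝ)^{m−k−r} × ((0,1]×ℝ)^r, and define the contraction (f ⊗_k^r f′)(α,β,γ) := Π_x(γ) ∫_{((0,1]×ℝ)^k} f(α,γ,ρ) f′(ρ,γ,β) d𝕞^{⊗k}(ρ), where Π_x(γ) is the product of the x-coordinates of γ. If f is constant on the orbits of ℍ[n] and f′ is constant on the orbits of ℍ[m], then f ⊗_k^r f′ is constant on the orbits of ℍ[n+m−2k−r]. -/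
open MeasureTheory
open scoped ENNReal

/-- The action `g[j]` of a map `g : (0,1] → (0,1]` on `((0,1] × ℝ)^j`, acting on the
time coordinates only. -/
def diagAct (g : ℝ → ℝ) {j : ℕ} (v : Fin j → ℝ × ℝ) : Fin j → ℝ × ℝ :=
  fun i => (g (v i).1, (v i).2)

/-- The measure `𝕞 = λ|_{(0,1]} ⊗ μ` on `(0,1] × ℝ`. -/
noncomputable def mLevy (μ : Measure ℝ) : Measure (ℝ × ℝ) :=
  (volume.restrict (Set.Ioc (0 : ℝ) 1)).prod μ

/-- The contraction `f ⊗_k^r f'` of kernels, as a function of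
`(α, β, γ) ∈ ((0,1]×ℝ)^{n-k-r} × ((0,1]×ℝ)^{m-k-r} × ((0,1]×ℝ)^r` (here `a = n-k-r`,
`b = m-k-r`): `Π_x(γ) ∫ f(α,γ,ρ) f'(ρ,γ,β) d𝕞^{⊗k}(ρ)`. -/
noncomputable def contraction (μ : Measure ℝ) {a b k r : ℕ}
    (f : (Fin a → ℝ × ℝ) → (Fin r → ℝ × ℝ) → (Fin k → ℝ × ℝ) → ℝ)
    (f' : (Fin k → ℝ × ℝ) → (Fin r → ℝ × ℝ) → (Fin b → ℝ × ℝ) → ℝ)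
    (α : Fin a → ℝ × ℝ) (β : Fin b → ℝ × ℝ) (γ : Fin r → ℝ × ℝ) : ℝ :=
  (∏ i, (γ i).2) * ∫ ρ, f α γ ρ * f' ρ γ β ∂(Measure.pi fun _ : Fin k => mLevy μ)

section Aux

/-- The `k`-th level-`d` interval, indexed by `Fin (2^d)`. -/
def J (d : ℕ) (k : Fin (2 ^ d)) : Set ℝ :=
  Set.Ioc (((k : ℕ) : ℝ) / 2 ^ d) ((((k : ℕ) : ℝ) + 1) / 2 ^ d)

lemma dyadI_eq (d : ℕ) (k : Fin (2 ^ d)) : dyadI d ((k : ℕ) + 1) = J d k := by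
  unfold dyadI J
  congr 1 <;> push_cast <;> ring

lemma J_subset (d : ℕ) (k : Fin (2 ^ d)) : J d k ⊆ Set.Ioc (0 : ℝ) 1 := by
  have hN : (0 : ℝ) < 2 ^ d := by positivity
  apply Set.Ioc_subset_Ioc
  · positivity
  · rw [div_le_one hN]
    exact_mod_cast Nat.succ_le_of_lt k.2

lemma J_meas (d : ℕ) (k : Fin (2 ^ d)) : MeasurableSet (J d k) :=
  measurableSet_Ioc

lemma J_cover (d : ℕ) {t : ℝ} (ht : t ∈ Set.Ioc (0 : ℝ) 1) :
    ∃ k : Fin (2 ^ d), t ∈ J d k := by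
  have hN : (0 : ℝ) < 2 ^ d := by positivity
  set m := ⌈t * 2 ^ d⌉₊ with hm
  have h1 : 1 ≤ m := Nat.one_le_ceil_iff.2 (by nlinarith [ht.1])
  have h2 : m ≤ 2 ^ d := Nat.ceil_le.2 (by push_cast; nlinarith [ht.2])
  have hc : ((m - 1 : ℕ) : ℝ) = (m : ℝ) - 1 := by
    rw [Nat.cast_sub h1]; norm_num
  refine ⟨⟨m - 1, by omega⟩, ?_, ?_⟩
  · rw [div_lt_iff₀ hN]
    have := Nat.ceil_lt_add_one (by nlinarith [ht.1] : (0 : ℝ) ≤ t * 2 ^ d)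
    simp only [hc]
    rw [← hm] at this
    linarith
  · rw [le_div_iff₀ hN]
    have := Nat.le_ceil (t * 2 ^ d)
    rw [← hm] at this
    simp only [hc]
    linarith

lemma J_disjoint (d : ℕ) : Pairwise (Function.onFun Disjoint (J d)) := by
  intro p q hpq
  have hN : (0 : ℝ) < 2 ^ d := by positivity
  have h : (p : ℕ) ≠ (q : ℕ) := fun h => hpq (Fin.ext h)
  unfold Function.onFun J
  rw [Set.Ioc_disjoint_Ioc]
  rcases h.lt_or_gt with h | h
  · have h' : ((p : ℕ) : ℝ) + 1 ≤ ((q : ℕ) : ℝ) := by exact_mod_cast h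
    refine le_trans (min_le_left _ _) (le_trans ?_ (le_max_right _ _))
    gcongr
  · have h' : ((q : ℕ) : ℝ) + 1 ≤ ((p : ℕ) : ℝ) := by exact_mod_cast h
    refine le_trans (min_le_right _ _) (le_trans ?_ (le_max_left _ _))
    gcongr

lemma J_union (d : ℕ) : Set.Ioc (0 : ℝ) 1 = ⋃ k : Fin (2 ^ d), J d k := by
  apply Set.Subset.antisymm
  · intro t ht
    obtain ⟨kk, hk⟩ := J_cover d ht
    exact Set.mem_iUnion.2 ⟨kk, hk⟩
  · exact Set.iUnion_subset fun kk => J_subset d kk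

/-- Shift constant of the dyadic permutation on interval `k`. -/
noncomputable def dyadC (d : ℕ) (π : Equiv.Perm (Fin (2 ^ d))) (k : Fin (2 ^ d)) : ℝ :=
  (((π k : ℕ) : ℝ) - ((k : ℕ) : ℝ)) / 2 ^ d

lemma gJ (g : ℝ → ℝ) (d : ℕ) (π : Equiv.Perm (Fin (2 ^ d)))
    (hπ : ∀ k : Fin (2 ^ d), ∀ t ∈ dyadI d ((k : ℕ) + 1),
      g t = (((π k : ℕ) : ℝ) + 1) / 2 ^ d - (((k : ℕ) + 1 : ℝ) / 2 ^ d - t))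
    (k : Fin (2 ^ d)) {t : ℝ} (ht : t ∈ J d k) : g t = t + dyadC d π k := by
  rw [hπ k t (by rw [dyadI_eq]; exact ht)]
  unfold dyadC
  push_cast
  ring

lemma preimage_shift (d : ℕ) (π : Equiv.Perm (Fin (2 ^ d))) (k : Fin (2 ^ d)) :
    (fun t => t + dyadC d π k) ⁻¹' J d (π k) = J d k := by
  unfold J dyadC
  rw [Set.preimage_add_const_Ioc]
  have hN : (0 : ℝ) < 2 ^ d := by positivity
  congr 1 <;> field_simp <;> ring

lemma dyadic_measurable {g : ℝ → ℝ} (hg : IsDyadicPerm g) : Measurable g := by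
  obtain ⟨h0, d, π, hπ⟩ := hg
  intro A hA
  have hset : g ⁻¹' A = (A ∩ (Set.Ioc (0 : ℝ) 1)ᶜ) ∪
      ⋃ kk : Fin (2 ^ d), (J d kk ∩ (fun t => t + dyadC d π kk) ⁻¹' A) := by
    ext t
    by_cases ht : t ∈ Set.Ioc (0 : ℝ) 1
    · simp only [Set.mem_preimage, Set.mem_union, Set.mem_inter_iff, Set.mem_compl_iff,
        Set.mem_iUnion]
      obtain ⟨kk, hk⟩ := J_cover d ht
      constructor
      · intro hgA
        exact Or.inr ⟨kk, hk, by rw [← gJ g d π hπ kk hk]; exact hgA⟩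
      · rintro (⟨_, hI⟩ | ⟨k', hk', hA'⟩)
        · exact absurd ht hI
        · rw [gJ g d π hπ k' hk']; exact hA'
    · simp only [Set.mem_preimage, Set.mem_union, Set.mem_inter_iff, Set.mem_compl_iff,
        Set.mem_iUnion, h0 t ht]
      constructor
      · intro hA'; exact Or.inl ⟨hA', ht⟩
      · rintro (⟨hA', _⟩ | ⟨k', hk', _⟩)
        · exact hA'
        · exact absurd (J_subset d k' hk') ht
  rw [hset]
  exact (hA.inter measurableSet_Ioc.compl).union
    (MeasurableSet.iUnion fun kk =>
      measurableSet_Ioc.inter ((measurable_add_const _) hA))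

lemma dyadic_measpres {g : ℝ → ℝ} (hg : IsDyadicPerm g) :
    MeasurePreserving g (volume.restrict (Set.Ioc (0 : ℝ) 1))
      (volume.restrict (Set.Ioc (0 : ℝ) 1)) := by
  have hmeas := dyadic_measurable hg
  obtain ⟨h0, d, π, hπ⟩ := hg
  refine ⟨hmeas, ?_⟩
  ext s hs
  rw [Measure.map_apply hmeas hs, Measure.restrict_apply (hmeas hs),
    Measure.restrict_apply hs]
  have key : ∀ kk : Fin (2 ^ d),
      g ⁻¹' s ∩ J d kk = (fun t => t + dyadC d π kk) ⁻¹' (s ∩ J d (π kk)) := by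
    intro kk
    rw [Set.preimage_inter, preimage_shift]
    ext t
    simp only [Set.mem_inter_iff, Set.mem_preimage]
    constructor
    · rintro ⟨h1, h2⟩
      exact ⟨by rw [← gJ g d π hπ kk h2]; exact h1, h2⟩
    · rintro ⟨h1, h2⟩
      exact ⟨by rw [gJ g d π hπ kk h2]; exact h1, h2⟩
  calc volume (g ⁻¹' s ∩ Set.Ioc (0 : ℝ) 1)
      = volume (⋃ kk : Fin (2 ^ d), g ⁻¹' s ∩ J d kk) := by
        rw [J_union d, Set.inter_iUnion]
    _ = ∑' kk : Fin (2 ^ d), volume (g ⁻¹' s ∩ J d kk) := by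
        refine measure_iUnion ?_ fun kk => (hmeas hs).inter measurableSet_Ioc
        exact fun p q hpq => (J_disjoint d hpq).mono inf_le_right inf_le_right
    _ = ∑' kk : Fin (2 ^ d), volume (s ∩ J d (π kk)) := by
        refine tsum_congr fun kk => ?_
        rw [key kk, ← Measure.map_apply (measurable_add_const _)
          (hs.inter (J_meas d (π kk))), map_add_right_eq_self]
    _ = ∑' kk : Fin (2 ^ d), volume (s ∩ J d kk) :=
        Equiv.tsum_eq π (fun kk => volume (s ∩ J d kk))
    _ = volume (⋃ kk : Fin (2 ^ d), s ∩ J d kk) := by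
        refine (measure_iUnion ?_ fun kk => hs.inter measurableSet_Ioc).symm
        exact fun p q hpq => (J_disjoint d hpq).mono inf_le_right inf_le_right
    _ = volume (s ∩ Set.Ioc (0 : ℝ) 1) := by
        rw [J_union d, Set.inter_iUnion]

end Aux

instance mLevy.sigmaFinite (μ : Measure ℝ) [SigmaFinite μ] : SigmaFinite (mLevy μ) := by
  unfold mLevy; infer_instance

lemma diagAct_measurable {g : ℝ → ℝ} (hg : Measurable g) (j : ℕ) :
    Measurable (diagAct g (j := j)) := by
  apply measurable_pi_lambda
  intro i
  show Measurable fun v : Fin j → ℝ × ℝ => ((g (v i).1, (v i).2) : ℝ × ℝ)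
  exact (hg.comp (measurable_fst.comp (measurable_pi_apply i))).prodMk
    (measurable_snd.comp (measurable_pi_apply i))

lemma prod_measpres (μ : Measure ℝ) [SigmaFinite μ] {g : ℝ → ℝ} (hg : IsDyadicPerm g) :
    MeasurePreserving (fun p : ℝ × ℝ => (g p.1, p.2)) (mLevy μ) (mLevy μ) :=
  (dyadic_measpres hg).prod (MeasurePreserving.id μ)

lemma pi_measpres (μ : Measure ℝ) [SigmaFinite μ] {g : ℝ → ℝ} (hg : IsDyadicPerm g) (j : ℕ) :
    MeasurePreserving (diagAct g (j := j)) (Measure.pi fun _ : Fin j => mLevy μ)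
      (Measure.pi fun _ : Fin j => mLevy μ) := by
  have hmeas := diagAct_measurable (dyadic_measurable hg) j
  have hT := prod_measpres μ hg
  refine ⟨hmeas, ?_⟩
  refine (Measure.pi_eq fun s hs => ?_).symm
  rw [Measure.map_apply hmeas (MeasurableSet.univ_pi hs)]
  have hpre : diagAct g ⁻¹' (Set.univ.pi s) =
      Set.univ.pi (fun i => (fun p : ℝ × ℝ => (g p.1, p.2)) ⁻¹' (s i)) := by
    ext v
    simp [diagAct, Set.mem_pi]
  rw [hpre, Measure.pi_pi]
  exact Finset.prod_congr rfl fun i _ => by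
    rw [← Measure.map_apply hT.measurable (hs i), hT.map_eq]


/-- if the kernels `f ∈ L₂(𝕞^{⊗n})` and `f' ∈ L₂(𝕞^{⊗m})` (with
`n = a + k + r ≥ 1`, `m = b + k + r ≥ 1`) are constant on the orbits of the diagonal groups
`ℍ[n]` resp. `ℍ[m]` of a group `ℍ` of dyadic permutations, and the contraction integrand is
absolutely integrable at every point, then the contraction `f ⊗_k^r f'` is constant on the
orbits of `ℍ[n+m-2k-r]`. -/
theorem stmt15 (μ : Measure ℝ) [SigmaFinite μ]
    (ℍ : Set (ℝ → ℝ)) (hdyad : ∀ g ∈ ℍ, IsDyadicPerm g)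
    (hid : id ∈ ℍ) (hcomp : ∀ g ∈ ℍ, ∀ h ∈ ℍ, g ∘ h ∈ ℍ)
    (hinv : ∀ g ∈ ℍ, ∃ g' ∈ ℍ, g ∘ g' = id ∧ g' ∘ g = id)
    (a b k r : ℕ) (hn : 1 ≤ a + k + r) (hm : 1 ≤ b + k + r)
    (f : (Fin a → ℝ × ℝ) → (Fin r → ℝ × ℝ) → (Fin k → ℝ × ℝ) → ℝ)
    (f' : (Fin k → ℝ × ℝ) → (Fin r → ℝ × ℝ) → (Fin b → ℝ × ℝ) → ℝ)
    (hf2 : MemLp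
      (fun p : (Fin a → ℝ × ℝ) × (Fin r → ℝ × ℝ) × (Fin k → ℝ × ℝ) => f p.1 p.2.1 p.2.2) 2
      ((Measure.pi fun _ : Fin a => mLevy μ).prod
        ((Measure.pi fun _ : Fin r => mLevy μ).prod (Measure.pi fun _ : Fin k => mLevy μ))))
    (hf'2 : MemLp
      (fun p : (Fin k → ℝ × ℝ) × (Fin r → ℝ × ℝ) × (Fin b → ℝ × ℝ) => f' p.1 p.2.1 p.2.2) 2
      ((Measure.pi fun _ : Fin k => mLevy μ).prod
        ((Measure.pi fun _ : Fin r => mLevy μ).prod (Measure.pi fun _ : Fin b => mLevy μ))))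
    (hint : ∀ (α : Fin a → ℝ × ℝ) (β : Fin b → ℝ × ℝ) (γ : Fin r → ℝ × ℝ),
      (∫⁻ ρ, ENNReal.ofReal |f α γ ρ * f' ρ γ β| ∂(Measure.pi fun _ : Fin k => mLevy μ)) < ⊤)
    (hfinv : ∀ g ∈ ℍ, ∀ α γ ρ, f (diagAct g α) (diagAct g γ) (diagAct g ρ) = f α γ ρ)
    (hf'inv : ∀ g ∈ ℍ, ∀ ρ γ β, f' (diagAct g ρ) (diagAct g γ) (diagAct g β) = f' ρ γ β) :
    ∀ g ∈ ℍ, ∀ (α : Fin a → ℝ × ℝ) (β : Fin b → ℝ × ℝ) (γ : Fin r → ℝ × ℝ),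
      contraction μ f f' (diagAct g α) (diagAct g β) (diagAct g γ) =
        contraction μ f f' α β γ := by

  intro g hg α β γ
  unfold contraction
  obtain ⟨g', hg', hgg', hg'g⟩ := hinv g hg
  have hgm := dyadic_measurable (hdyad g hg)
  have hg'm := dyadic_measurable (hdyad g' hg')
  -- the measurable equiv given by `diagAct g` on `Fin k → ℝ × ℝ`
  let e : (Fin k → ℝ × ℝ) ≃ᵐ (Fin k → ℝ × ℝ) :=
    { toFun := diagAct g
      invFun := diagAct g'
      left_inv := fun v => by
        funext i
        have := congrFun hg'g (v i).1
        simp only [Function.comp_apply, id_eq] at this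
        simp [diagAct, this]
      right_inv := fun v => by
        funext i
        have := congrFun hgg' (v i).1
        simp only [Function.comp_apply, id_eq] at this
        simp [diagAct, this]
      measurable_toFun := diagAct_measurable hgm k
      measurable_invFun := diagAct_measurable hg'm k }
  have hpi := pi_measpres μ (hdyad g hg) k
  have hpe : MeasurePreserving e (Measure.pi fun _ : Fin k => mLevy μ)
      (Measure.pi fun _ : Fin k => mLevy μ) := hpi
  have hI : (∫ ρ, f (diagAct g α) (diagAct g γ) ρ * f' ρ (diagAct g γ) (diagAct g β)
        ∂(Measure.pi fun _ : Fin k => mLevy μ)) =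
      ∫ ρ, f α γ ρ * f' ρ γ β ∂(Measure.pi fun _ : Fin k => mLevy μ) := by
    rw [← MeasurePreserving.integral_comp' hpe
      (fun ρ => f (diagAct g α) (diagAct g γ) ρ * f' ρ (diagAct g γ) (diagAct g β))]
    refine integral_congr_ae (Filter.Eventually.of_forall fun ρ => ?_)
    show f (diagAct g α) (diagAct g γ) (diagAct g ρ) *
        f' (diagAct g ρ) (diagAct g γ) (diagAct g β) = f α γ ρ * f' ρ γ β
    rw [hfinv g hg, hf'inv g hg]
  rw [hI]
  congr 1
end
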